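/- Let W ∈ ℝ^{2n×n} with 1 < n be such that x ↦ ReLU(Wx) is injective (equivalently, W has a directed spanning set of ℝ^n with respect to every x ∈ ℝ^n). Then there exist a permutation of the rows of W, an invertible matrix B ∈ ℝ^{n×n}, and a diagonal matrix D ∈ ℝ^{n×n} with strictly positive diagonal entries, such that after the row permutation W equals the block matrix [B; −DB] (the first n rows are B and the last n rows are −DB). -/

import Mathlib

/-- Componentwise ReLU applied to a vector. -/
noncomputable def relu {m : ℕ} (y : Fin m → ℝ) : Fin m → ℝ := fun j => max (y j) 0


open Matrix

/-- A point avoiding the kernels of finitely many nonzero functionals. -/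
lemma relu_aux_exists_ne {V : Type*} [AddCommGroup V] [Module ℝ V] {ι : Type*}
    [DecidableEq ι] (s : Finset ι)
    (f : ι → V →ₗ[ℝ] ℝ) (hf : ∀ k ∈ s, f k ≠ 0) :
    ∃ x : V, ∀ k ∈ s, f k x ≠ 0 := by
  classical
  induction s using Finset.induction_on with
  | empty => exact ⟨0, by simp⟩
  | insert a s ha ih =>
    obtain ⟨x, hx⟩ := ih (fun k hk => hf k (Finset.mem_insert_of_mem hk))
    have hfa : f a ≠ 0 := hf a (Finset.mem_insert_self a s)
    obtain ⟨y, hy⟩ : ∃ y, f a y ≠ 0 := by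
      by_contra h
      push_neg at h
      exact hfa (LinearMap.ext fun z => by simp [h z])
    obtain ⟨t, ht⟩ := Infinite.exists_notMem_finset
      (insert (-(f a x / f a y)) (s.image fun k => -(f k x / f k y)))
    refine ⟨x + t • y, ?_⟩
    intro k hk
    rw [map_add, LinearMap.map_smul, smul_eq_mul]
    rcases Finset.mem_insert.mp hk with rfl | hks
    · intro h
      apply ht
      have : t = -(f k x / f k y) := by field_simp; linarith [h]
      rw [this]
      exact Finset.mem_insert_self _ _
    · intro h
      by_cases hky : f k y = 0
      · rw [hky, mul_zero, add_zero] at h; exact hx k hks h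
      · apply ht
        have : t = -(f k x / f k y) := by field_simp; linarith [h]
        rw [this]
        exact Finset.mem_insert_of_mem (Finset.mem_image_of_mem _ hks)

/-- If the kernel of `h` is contained in the kernel of `g` (functionals), `g` is a multiple. -/
lemma relu_aux_ker_le {V : Type*} [AddCommGroup V] [Module ℝ V]
    (g h : V →ₗ[ℝ] ℝ) (hle : ∀ x, h x = 0 → g x = 0) :
    ∃ c : ℝ, ∀ x, g x = c * h x := by
  by_cases hh : ∀ y, h y = 0
  · exact ⟨0, fun x => by rw [hle x (hh x), hh x, mul_zero]⟩
  · push_neg at hh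
    obtain ⟨y, hy⟩ := hh
    refine ⟨g y / h y, fun x => ?_⟩
    have hker : h (x - (h x / h y) • y) = 0 := by
      rw [map_sub, LinearMap.map_smul, smul_eq_mul]
      field_simp
      ring
    have := hle _ hker
    rw [map_sub, LinearMap.map_smul, smul_eq_mul, sub_eq_zero] at this
    rw [this]; field_simp

/-- The linear functional given by dot product. -/
noncomputable def dotL {n : ℕ} (v : Fin n → ℝ) : (Fin n → ℝ) →ₗ[ℝ] ℝ where
  toFun x := v ⬝ᵥ x
  map_add' x y := by simp [dotProduct_add]
  map_smul' c x := by simp [dotProduct_smul]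

lemma dotL_eq_zero {n : ℕ} {v : Fin n → ℝ} (h : ∀ x, v ⬝ᵥ x = 0) : v = 0 := by
  have := h v
  rwa [dotProduct_self_eq_zero] at this

/-- If a set does not span, there is a nonzero vector orthogonal to it. -/
lemma relu_aux_orth {n : ℕ} (s : Set (Fin n → ℝ)) (h : Submodule.span ℝ s ≠ ⊤) :
    ∃ v : Fin n → ℝ, v ≠ 0 ∧ ∀ u ∈ s, u ⬝ᵥ v = 0 := by
  classical
  set e : (Fin n → ℝ) ≃ₗ[ℝ] EuclideanSpace ℝ (Fin n) :=
    (WithLp.linearEquiv 2 ℝ (Fin n → ℝ)).symm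
  set K : Submodule ℝ (EuclideanSpace ℝ (Fin n)) := (Submodule.span ℝ s).map (e : (Fin n → ℝ) →ₗ[ℝ] EuclideanSpace ℝ (Fin n))
  have hK : K ≠ ⊤ := by
    intro htop
    apply h
    rw [eq_top_iff]
    intro x _
    have hx : e x ∈ K := htop ▸ Submodule.mem_top
    obtain ⟨y, hy, hyx⟩ := hx
    rwa [← e.injective hyx]
  have hbot : Kᗮ ≠ ⊥ := fun hb => hK (Submodule.orthogonal_eq_bot_iff.mp hb)
  obtain ⟨v, hvK, hv⟩ := Submodule.exists_mem_ne_zero_of_ne_bot hbot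
  refine ⟨e.symm v, fun h0 => hv ?_, fun u hu => ?_⟩
  · have := congrArg e h0
    simpa using this
  · have hmem : e u ∈ K := Submodule.mem_map_of_mem (Submodule.subset_span hu)
    have := (Submodule.mem_orthogonal K v).mp hvK (e u) hmem
    rw [← this, PiLp.inner_apply]
    simp only [RCLike.inner_apply, conj_trivial, dotProduct]
    refine Finset.sum_congr rfl fun x _ => ?_
    have h1 : e u x = u x := rfl
    have h2 : e.symm v x = v x := rfl
    rw [h1, h2, mul_comm]

/-- Injectivity of the ReLU layer implies the directed spanning condition. -/
lemma relu_aux_dss {n m : ℕ} (W : Matrix (Fin m) (Fin n) ℝ)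
    (hinj : Function.Injective (fun x : Fin n → ℝ => relu (W.mulVec x)))
    (x : Fin n → ℝ) :
    Submodule.span ℝ ((fun j => W j) '' {j | 0 ≤ W j ⬝ᵥ x}) = ⊤ := by
  classical
  by_contra h
  obtain ⟨v, hv0, hv⟩ := relu_aux_orth _ h
  set T : Finset ℝ := (Finset.univ.filter
    (fun j => W j ⬝ᵥ x < 0 ∧ 0 < W j ⬝ᵥ v)).image
    (fun j => -(W j ⬝ᵥ x) / (W j ⬝ᵥ v)) with hT
  set t : ℝ := (insert (1:ℝ) T).min' (Finset.insert_nonempty _ _) with htdef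
  have ht_mem := Finset.min'_mem (insert (1:ℝ) T) (Finset.insert_nonempty _ _)
  have ht_pos : 0 < t := by
    rcases Finset.mem_insert.mp ht_mem with h1 | hTm
    · rw [htdef, h1]; norm_num
    · obtain ⟨j, hj, hje⟩ := Finset.mem_image.mp hTm
      obtain ⟨hjx, hjv⟩ := (Finset.mem_filter.mp hj).2
      rw [htdef, ← hje]
      exact div_pos (by linarith) hjv
  have happ : (fun x : Fin n → ℝ => relu (W.mulVec x)) (x + t • v)
      = (fun x : Fin n → ℝ => relu (W.mulVec x)) x := by
    simp only
    funext j
    show max (W j ⬝ᵥ (x + t • v)) 0 = max (W j ⬝ᵥ x) 0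
    rw [dotProduct_add]
    have hsm : W j ⬝ᵥ (t • v) = t * (W j ⬝ᵥ v) := by
      simp [dotProduct, Finset.mul_sum]; ring_nf
      exact Finset.sum_congr rfl fun i _ => by ring
    rw [hsm]
    by_cases hj : 0 ≤ W j ⬝ᵥ x
    · rw [hv _ ⟨j, hj, rfl⟩, mul_zero, add_zero]
    · push_neg at hj
      have h2 : W j ⬝ᵥ x + t * (W j ⬝ᵥ v) ≤ 0 := by
        by_cases hjv : 0 < W j ⬝ᵥ v
        · have hmem : -(W j ⬝ᵥ x) / (W j ⬝ᵥ v) ∈ insert (1:ℝ) T :=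
            Finset.mem_insert_of_mem (Finset.mem_image_of_mem _
              (Finset.mem_filter.mpr ⟨Finset.mem_univ _, hj, hjv⟩))
          have h3 := Finset.min'_le _ _ hmem
          rw [← htdef] at h3
          have h4 := (le_div_iff₀ hjv).mp h3
          linarith
        · push_neg at hjv
          nlinarith
      rw [max_eq_right h2, max_eq_right hj.le]
  have hxx := hinj happ
  have : t • v = 0 := by
    have := congrArg (fun y => y - x) hxx
    simpa [add_sub_cancel_left] using this
  rcases smul_eq_zero.mp this with h1 | h1
  · exact absurd h1 (ne_of_gt ht_pos)
  · exact hv0 h1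

/-- A point on the hyperplane `v ⊥` avoiding kernels of non-parallel vectors. -/
lemma relu_aux_hyperplane {n : ℕ} {ι : Type*} [DecidableEq ι] (v : Fin n → ℝ)
    (s : Finset ι) (u : ι → Fin n → ℝ)
    (hu : ∀ k ∈ s, ∀ c : ℝ, u k ≠ c • v) :
    ∃ y : Fin n → ℝ, v ⬝ᵥ y = 0 ∧ ∀ k ∈ s, u k ⬝ᵥ y ≠ 0 := by
  classical
  set H := LinearMap.ker (dotL v) with hH
  have hres : ∀ k ∈ s, (dotL (u k)).comp H.subtype ≠ 0 := by
    intro k hk h0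
    have hle : ∀ x, dotL v x = 0 → dotL (u k) x = 0 := by
      intro x hx
      have hxH : x ∈ H := LinearMap.mem_ker.mpr hx
      have := congrFun (congrArg DFunLike.coe h0) ⟨x, hxH⟩
      simpa using this
    obtain ⟨c, hc⟩ := relu_aux_ker_le (dotL (u k)) (dotL v) hle
    apply hu k hk c
    have hz : ∀ x, (u k - c • v) ⬝ᵥ x = 0 := by
      intro x
      have h1 : u k ⬝ᵥ x = c * (v ⬝ᵥ x) := hc x
      rw [sub_dotProduct, smul_dotProduct, h1, smul_eq_mul, sub_self]
    exact sub_eq_zero.mp (dotL_eq_zero hz)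
  obtain ⟨⟨y, hy⟩, hgen⟩ := relu_aux_exists_ne s
    (fun k => (dotL (u k)).comp H.subtype) hres
  exact ⟨y, LinearMap.mem_ker.mp hy, fun k hk => hgen k hk⟩

/-- Spanning sets of rows have at least `n` elements. -/
lemma relu_aux_card {n m : ℕ} (W : Matrix (Fin m) (Fin n) ℝ) (S : Finset (Fin m))
    (h : Submodule.span ℝ ((fun j => W j) '' ↑S) = ⊤) : n ≤ S.card := by
  classical
  have h2 : Module.finrank ℝ (Submodule.span ℝ ((fun j => W j) '' ↑S))
      ≤ (S.image (fun j => W j)).card := by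
    have := finrank_span_finset_le_card (R := ℝ) (S.image (fun j => W j))
    rw [Finset.coe_image] at this
    exact this
  rw [h, finrank_top] at h2
  rw [Module.finrank_fin_fun ℝ] at h2
  exact h2.trans (Finset.card_image_le)

/-- Two members of a linearly independent family are not parallel. -/
lemma relu_aux_indep_ne {V : Type*} [AddCommGroup V] [Module ℝ V] {ι : Type*} [Fintype ι]
    [DecidableEq ι] {v : ι → V} (hv : LinearIndependent ℝ v) {p p' : ι} (hne : p ≠ p')
    {c : ℝ} (h : v p' = c • v p) : False := by
  classical
  set g : ι → ℝ := fun q => if q = p then c else if q = p' then (-1:ℝ) else 0 with hg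
  have hsum : ∑ q, g q • v q = 0 := by
    have hzero : ∀ q ∈ Finset.univ, q ∉ ({p, p'} : Finset ι) → g q • v q = 0 := by
      intro q _ hq
      rw [Finset.mem_insert, Finset.mem_singleton] at hq
      push_neg at hq
      simp [hg, hq.1, hq.2]
    have e1 : g p • v p = c • v p := by simp [hg]
    have e2 : g p' • v p' = -(c • v p) := by
      simp [hg, hne.symm, h]
    rw [← Finset.sum_subset (Finset.subset_univ ({p, p'} : Finset ι)) hzero,
      Finset.sum_pair hne, e1, e2, add_neg_cancel]
  have := Fintype.linearIndependent_iff.mp hv g hsum p'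
  simp [hg, hne.symm] at this

/-- **Structure of minimally expansive injective ReLU layers**: if `W ∈ ℝ^{2n×n}` (with
`1 < n`) yields an injective ReLU layer, then up to a permutation of the rows, `W` has the
block form `[B ; -D B]` with `B` invertible and `D` diagonal with strictly positive entries. -/
theorem minimally_expansive_injective_structure {n : ℕ} (hn : 1 < n)
    (W : Matrix (Fin (n + n)) (Fin n) ℝ)
    (hinj : Function.Injective (fun x : Fin n → ℝ => relu (W.mulVec x))) :
    ∃ (σ : Equiv.Perm (Fin (n + n))) (B : Matrix (Fin n) (Fin n) ℝ) (d : Fin n → ℝ),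
      IsUnit B ∧ (∀ i, 0 < d i) ∧
      (∀ i : Fin n, W (σ (Fin.castAdd n i)) = B i) ∧
      (∀ i : Fin n, W (σ (Fin.natAdd n i)) = -(d i • B i)) := by
  classical
  have hdss : ∀ x : Fin n → ℝ,
      Submodule.span ℝ ((fun j => W j) '' {j | 0 ≤ W j ⬝ᵥ x}) = ⊤ := relu_aux_dss W hinj
  set Pos : (Fin n → ℝ) → Finset (Fin (n + n)) :=
    fun x => Finset.univ.filter (fun j => 0 < W j ⬝ᵥ x) with hPos
  set Neg : (Fin n → ℝ) → Finset (Fin (n + n)) :=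
    fun x => Finset.univ.filter (fun j => W j ⬝ᵥ x < 0) with hNeg
  -- spanning of the strictly positive rows at semi-generic points
  have hspanPos : ∀ x : Fin n → ℝ, (∀ j, W j ≠ 0 → W j ⬝ᵥ x ≠ 0) →
      Submodule.span ℝ ((fun j => W j) '' ↑(Pos x)) = ⊤ := by
    intro x hx
    refine le_antisymm le_top ?_
    rw [← hdss x]
    refine le_trans (Submodule.span_mono ?_) (le_of_eq (Submodule.span_insert_zero))
    rintro u ⟨j, hj, rfl⟩
    by_cases h0 : W j = 0
    · exact Set.mem_insert_iff.mpr (Or.inl h0)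
    · refine Set.mem_insert_iff.mpr (Or.inr ⟨j, ?_, rfl⟩)
      simp only [hPos, Finset.coe_filter, Finset.mem_univ, true_and, Set.mem_setOf_eq]
      exact lt_of_le_of_ne hj (Ne.symm (hx j h0))
  have hspanNeg : ∀ x : Fin n → ℝ, (∀ j, W j ≠ 0 → W j ⬝ᵥ x ≠ 0) →
      Submodule.span ℝ ((fun j => W j) '' ↑(Neg x)) = ⊤ := by
    intro x hx
    refine le_antisymm le_top ?_
    rw [← hdss (-x)]
    refine le_trans (Submodule.span_mono ?_) (le_of_eq (Submodule.span_insert_zero))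
    rintro u ⟨j, hj, rfl⟩
    rw [Set.mem_setOf_eq, dotProduct_neg] at hj
    by_cases h0 : W j = 0
    · exact Set.mem_insert_iff.mpr (Or.inl h0)
    · refine Set.mem_insert_iff.mpr (Or.inr ⟨j, ?_, rfl⟩)
      simp only [hNeg, Finset.coe_filter, Finset.mem_univ, true_and, Set.mem_setOf_eq]
      have := hx j h0
      rcases lt_trichotomy (W j ⬝ᵥ x) 0 with h | h | h
      · exact h
      · exact absurd h this
      · linarith
  -- all rows are nonzero
  have hrows : ∀ j, W j ≠ 0 := by
    by_contra hc
    push_neg at hc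
    obtain ⟨j0, hj0⟩ := hc
    obtain ⟨x, hx⟩ := relu_aux_exists_ne (Finset.univ.filter (fun k => W k ≠ 0))
      (fun k => dotL (W k)) (by
        intro k hk h0
        exact (Finset.mem_filter.mp hk).2 (dotL_eq_zero (fun z => by
          simpa [dotL] using LinearMap.congr_fun h0 z)))
    have hx' : ∀ j, W j ≠ 0 → W j ⬝ᵥ x ≠ 0 := by
      intro j hj
      exact hx j (Finset.mem_filter.mpr ⟨Finset.mem_univ _, hj⟩)
    have hP := relu_aux_card W (Pos x) (hspanPos x hx')
    have hN := relu_aux_card W (Neg x) (hspanNeg x hx')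
    have hdisj : Disjoint (Pos x) (Neg x) := by
      rw [Finset.disjoint_left]
      intro k hk1 hk2
      simp only [hPos, Finset.mem_filter] at hk1
      simp only [hNeg, Finset.mem_filter] at hk2
      linarith [hk1.2, hk2.2]
    have hsub : Pos x ∪ Neg x ⊆ Finset.univ.erase j0 := by
      intro k hk
      refine Finset.mem_erase.mpr ⟨?_, Finset.mem_univ _⟩
      rintro rfl
      rcases Finset.mem_union.mp hk with h | h
      · simp only [hPos, Finset.mem_filter] at h
        rw [hj0, zero_dotProduct] at h
        exact lt_irrefl _ h.2
      · simp only [hNeg, Finset.mem_filter] at h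
        rw [hj0, zero_dotProduct] at h
        exact lt_irrefl _ h.2
    have hcard := Finset.card_le_card hsub
    rw [Finset.card_union_of_disjoint hdisj] at hcard
    have h1 : (Finset.univ.erase j0).card = (n + n) - 1 := by
      rw [Finset.card_erase_of_mem (Finset.mem_univ _), Finset.card_univ, Fintype.card_fin]
    omega
  -- cardinality at generic points
  have hgen : ∀ x : Fin n → ℝ, (∀ j, W j ⬝ᵥ x ≠ 0) →
      (Pos x).card = n ∧ (Neg x).card = n := by
    intro x hx
    have hP := relu_aux_card W (Pos x) (hspanPos x (fun j _ => hx j))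
    have hN := relu_aux_card W (Neg x) (hspanNeg x (fun j _ => hx j))
    have hdisj : Disjoint (Pos x) (Neg x) := by
      rw [Finset.disjoint_left]
      intro k hk1 hk2
      simp only [hPos, Finset.mem_filter] at hk1
      simp only [hNeg, Finset.mem_filter] at hk2
      linarith [hk1.2, hk2.2]
    have hunion : Pos x ∪ Neg x = Finset.univ := by
      ext k
      simp only [hPos, hNeg, Finset.mem_union, Finset.mem_filter, Finset.mem_univ, true_and,
        iff_true]
      rcases lt_trichotomy (W k ⬝ᵥ x) 0 with h | h | h
      · exact Or.inr h
      · exact absurd h (hx k)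
      · exact Or.inl h
    have := congrArg Finset.card hunion
    rw [Finset.card_union_of_disjoint hdisj, Finset.card_univ, Fintype.card_fin] at this
    omega
  -- pairing: every row has an antipodal partner
  have hpair : ∀ j, ∃ k, ∃ dd : ℝ, 0 < dd ∧ W k = -(dd • W j) := by
    intro j
    by_contra hcon
    push_neg at hcon
    set Par : Finset (Fin (n + n)) :=
      Finset.univ.filter (fun k => ∃ c : ℝ, W k = c • W j) with hPar
    set Rest : Finset (Fin (n + n)) :=
      Finset.univ.filter (fun k => ∀ c : ℝ, W k ≠ c • W j) with hRest
    have hParRest : ∀ k, k ∈ Par ∨ k ∈ Rest := by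
      intro k
      by_cases h : ∃ c : ℝ, W k = c • W j
      · exact Or.inl (Finset.mem_filter.mpr ⟨Finset.mem_univ _, h⟩)
      · push_neg at h
        exact Or.inr (Finset.mem_filter.mpr ⟨Finset.mem_univ _, h⟩)
    have hdisjRP : ∀ k, k ∈ Rest → k ∉ Par := by
      intro k hk hkP
      obtain ⟨c, hc⟩ := (Finset.mem_filter.mp hkP).2
      exact (Finset.mem_filter.mp hk).2 c hc
    have hParPos : ∀ k ∈ Par, ∃ c : ℝ, 0 < c ∧ W k = c • W j := by
      intro k hk
      obtain ⟨c, hc⟩ := (Finset.mem_filter.mp hk).2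
      rcases lt_trichotomy c 0 with h | h | h
      · exact absurd (by rw [hc, neg_smul, neg_neg] : W k = -((-c) • W j)) (hcon k (-c) (by linarith))
      · exact absurd (by rw [hc, h, zero_smul] : W k = 0) (hrows k)
      · exact ⟨c, h, hc⟩
    obtain ⟨y, hyj, hy⟩ := relu_aux_hyperplane (W j) Rest (fun k => W k)
      (fun k hk => (Finset.mem_filter.mp hk).2)
    set T : Finset ℝ := insert (1:ℝ)
      (Rest.image fun k => |W k ⬝ᵥ y| / (|W k ⬝ᵥ W j| + 1)) with hT
    set ε : ℝ := T.min' ⟨1, Finset.mem_insert_self _ _⟩ with hε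
    have hε_mem : ε ∈ T := Finset.min'_mem _ _
    have hε_pos : 0 < ε := by
      rcases Finset.mem_insert.mp hε_mem with h1 | h1
      · rw [h1]; norm_num
      · obtain ⟨k, hk, he⟩ := Finset.mem_image.mp h1
        rw [← he]
        exact div_pos (abs_pos.mpr (hy k hk)) (by positivity)
    have hεk : ∀ k ∈ Rest, ε * |W k ⬝ᵥ W j| < |W k ⬝ᵥ y| := by
      intro k hk
      have h1 : ε ≤ |W k ⬝ᵥ y| / (|W k ⬝ᵥ W j| + 1) :=
        Finset.min'_le _ _ (Finset.mem_insert_of_mem (Finset.mem_image_of_mem _ hk))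
      have h2 : ε * (|W k ⬝ᵥ W j| + 1) ≤ |W k ⬝ᵥ y| := by
        rw [← le_div_iff₀ (by positivity)]
        exact h1
      nlinarith [abs_nonneg (W k ⬝ᵥ W j)]
    have hjj : 0 < W j ⬝ᵥ W j := by
      have h1 : W j ⬝ᵥ W j ≠ 0 := fun h => hrows j (dotProduct_self_eq_zero.mp h)
      have h2 : 0 ≤ W j ⬝ᵥ W j := Finset.sum_nonneg fun i _ => mul_self_nonneg _
      exact lt_of_le_of_ne h2 (Ne.symm h1)
    set zp : Fin n → ℝ := y + ε • W j with hzp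
    set zm : Fin n → ℝ := y - ε • W j with hzm
    have hdp : ∀ k, W k ⬝ᵥ zp = W k ⬝ᵥ y + ε * (W k ⬝ᵥ W j) := by
      intro k
      rw [hzp, dotProduct_add, dotProduct_smul, smul_eq_mul]
    have hdm : ∀ k, W k ⬝ᵥ zm = W k ⬝ᵥ y - ε * (W k ⬝ᵥ W j) := by
      intro k
      rw [hzm, dotProduct_sub, dotProduct_smul, smul_eq_mul]
    -- signs on Rest
    have hRsign : ∀ k ∈ Rest,
        ((0 < W k ⬝ᵥ zp ↔ 0 < W k ⬝ᵥ y) ∧ (0 < W k ⬝ᵥ zm ↔ 0 < W k ⬝ᵥ y))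
          ∧ (W k ⬝ᵥ zp ≠ 0 ∧ W k ⬝ᵥ zm ≠ 0) := by
      intro k hk
      have h1 := hεk k hk
      have h2 : |ε * (W k ⬝ᵥ W j)| < |W k ⬝ᵥ y| := by
        rw [abs_mul, abs_of_pos hε_pos]
        exact h1
      have h3 := abs_lt.mp h2
      have hky := hy k hk
      rw [hdp k, hdm k]
      rcases lt_trichotomy (W k ⬝ᵥ y) 0 with h | h | h
      · rw [abs_of_neg h] at h3
        constructor
        · constructor <;> constructor <;> intro <;> linarith [h3.1, h3.2]
        · constructor <;> intro heq <;> linarith [h3.1, h3.2]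
      · exact absurd h hky
      · rw [abs_of_pos h] at h3
        constructor
        · constructor <;> constructor <;> intro <;> linarith [h3.1, h3.2]
        · constructor <;> intro heq <;> linarith [h3.1, h3.2]
    -- signs on Par
    have hPsign : ∀ k ∈ Par, 0 < W k ⬝ᵥ zp ∧ W k ⬝ᵥ zm < 0 := by
      intro k hk
      obtain ⟨c, hc, hck⟩ := hParPos k hk
      have hky : W k ⬝ᵥ y = 0 := by
        rw [hck, smul_dotProduct, hyj, smul_zero]
      have hkj : W k ⬝ᵥ W j = c * (W j ⬝ᵥ W j) := by
        rw [hck, smul_dotProduct, smul_eq_mul]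
      constructor
      · rw [hdp k, hky, hkj, zero_add]
        positivity
      · rw [hdm k, hky, hkj, zero_sub, neg_neg_iff_pos]
        positivity
    have hzpgen : ∀ k, W k ⬝ᵥ zp ≠ 0 := by
      intro k
      rcases hParRest k with h | h
      · exact ne_of_gt (hPsign k h).1
      · exact (hRsign k h).2.1
    have hzmgen : ∀ k, W k ⬝ᵥ zm ≠ 0 := by
      intro k
      rcases hParRest k with h | h
      · exact ne_of_lt (hPsign k h).2
      · exact (hRsign k h).2.2
    obtain ⟨hcp, -⟩ := hgen zp hzpgen
    obtain ⟨hcm, -⟩ := hgen zm hzmgen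
    set PR : Finset (Fin (n + n)) := Rest.filter (fun k => 0 < W k ⬝ᵥ y) with hPR
    have h1 : Pos zp = PR ∪ Par := by
      ext k
      simp only [hPos, hPR, Finset.mem_union, Finset.mem_filter, Finset.mem_univ, true_and]
      constructor
      · intro hpos
        rcases hParRest k with h | h
        · exact Or.inr h
        · exact Or.inl ⟨h, ((hRsign k h).1.1).mp hpos⟩
      · rintro (⟨hk, hpos⟩ | hk)
        · exact ((hRsign k hk).1.1).mpr hpos
        · exact (hPsign k hk).1
    have h2 : Pos zm = PR := by
      ext k
      simp only [hPos, hPR, Finset.mem_filter, Finset.mem_univ, true_and]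
      constructor
      · intro hpos
        rcases hParRest k with h | h
        · exact absurd hpos (not_lt.mpr (le_of_lt (hPsign k h).2))
        · exact ⟨h, ((hRsign k h).1.2).mp hpos⟩
      · rintro ⟨hk, hpos⟩
        exact ((hRsign k hk).1.2).mpr hpos
    have hdisj2 : Disjoint PR Par := by
      rw [Finset.disjoint_left]
      intro k hk
      exact hdisjRP k (Finset.mem_of_mem_filter _ hk)
    have hjPar : j ∈ Par :=
      Finset.mem_filter.mpr ⟨Finset.mem_univ _, ⟨1, (one_smul _ _).symm⟩⟩
    have hParpos : 0 < Par.card := Finset.card_pos.mpr ⟨j, hjPar⟩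
    rw [h1, Finset.card_union_of_disjoint hdisj2] at hcp
    rw [h2] at hcm
    omega
  -- assembly at a generic point
  obtain ⟨x₀, hx₀⟩ := relu_aux_exists_ne (Finset.univ : Finset (Fin (n + n)))
    (fun k => dotL (W k)) (fun k _ h0 => hrows k (dotL_eq_zero (fun z => by
      simpa [dotL] using LinearMap.congr_fun h0 z)))
  have hx₀' : ∀ j, W j ⬝ᵥ x₀ ≠ 0 := fun j => hx₀ j (Finset.mem_univ _)
  obtain ⟨hcP, hcN⟩ := hgen x₀ hx₀'
  set P := Pos x₀ with hP
  set N := Neg x₀ with hN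
  have hspan := hspanPos x₀ (fun j _ => hx₀' j)
  have hPind : LinearIndependent ℝ (fun p : ↥P => W ↑p) := by
    apply linearIndependent_of_top_le_span_of_card_eq_finrank
    · have hre : Set.range (fun p : ↥P => W ↑p) = (fun j => W j) '' ↑P := by
        ext u
        constructor
        · rintro ⟨p, rfl⟩
          exact ⟨↑p, p.2, rfl⟩
        · rintro ⟨j, hj, rfl⟩
          exact ⟨⟨j, hj⟩, rfl⟩
      rw [hre, hP, hspan]
    · rw [Fintype.card_coe, Module.finrank_fin_fun]
      exact hcP
  have hpairP : ∀ p : ↥P, ∃ (k : ↥N) (c : ℝ), 0 < c ∧ W ↑k = -(c • W ↑p) := by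
    intro p
    obtain ⟨k, c, hc, hk⟩ := hpair ↑p
    have hpP : 0 < W ↑p ⬝ᵥ x₀ := (Finset.mem_filter.mp p.2).2
    have hkN : k ∈ N := by
      refine Finset.mem_filter.mpr ⟨Finset.mem_univ _, ?_⟩
      rw [hk, neg_dotProduct, smul_dotProduct, smul_eq_mul]
      have : 0 < c * (W ↑p ⬝ᵥ x₀) := mul_pos hc hpP
      linarith
    exact ⟨⟨k, hkN⟩, c, hc, hk⟩
  choose ψ dd hdd hψ using hpairP
  have hψinj : Function.Injective ψ := by
    intro p p' he
    by_contra hne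
    have h1 : -(dd p • W ↑p) = -(dd p' • W ↑p') := by rw [← hψ p, he, hψ p']
    have h3 : dd p • W ↑p = dd p' • W ↑p' := neg_injective h1
    have h2 : W ↑p' = ((dd p')⁻¹ * dd p) • W ↑p := by
      calc W ↑p' = (dd p')⁻¹ • (dd p' • W ↑p') := by
            rw [smul_smul, inv_mul_cancel₀ (ne_of_gt (hdd p')), one_smul]
        _ = (dd p')⁻¹ • (dd p • W ↑p) := by rw [← h3]
        _ = ((dd p')⁻¹ * dd p) • W ↑p := by rw [smul_smul]
    exact relu_aux_indep_ne hPind hne h2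
  have hcP' : Fintype.card ↥P = n := by rw [Fintype.card_coe]; exact hcP
  set g : Fin n ≃ ↥P := (Fintype.equivFinOfCardEq hcP').symm with hg
  set θ : Fin n ⊕ Fin n → Fin (n + n) :=
    Sum.elim (fun i => ↑(g i)) (fun i => ↑(ψ (g i))) with hθ
  have hPN : ∀ (a : ↥P) (b : ↥N), (↑a : Fin (n + n)) ≠ ↑b := by
    intro a b hab
    have h1 := (Finset.mem_filter.mp a.2).2
    have h2 := (Finset.mem_filter.mp b.2).2
    rw [hab] at h1
    linarith
  have hθinj : Function.Injective θ := by
    rintro (a | a) (b | b) hab <;> simp only [hθ, Sum.elim_inl, Sum.elim_inr] at hab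
    · exact congrArg Sum.inl (g.injective (Subtype.ext hab))
    · exact absurd hab (hPN (g a) (ψ (g b)))
    · exact absurd hab.symm (hPN (g b) (ψ (g a)))
    · exact congrArg Sum.inr (g.injective (hψinj (Subtype.ext hab)))
  have hθbij : Function.Bijective θ :=
    (Fintype.bijective_iff_injective_and_card θ).mpr ⟨hθinj, by
      rw [Fintype.card_sum, Fintype.card_fin, Fintype.card_fin]⟩
  set τ := Equiv.ofBijective θ hθbij with hτ
  refine ⟨finSumFinEquiv.symm.trans τ, Matrix.of (fun i => W ↑(g i)),
    fun i => dd (g i), ?_, fun i => hdd (g i), ?_, ?_⟩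
  · rw [← Matrix.linearIndependent_rows_iff_isUnit]
    exact hPind.comp g g.injective
  · intro i
    show W (τ (finSumFinEquiv.symm (Fin.castAdd n i))) = _
    rw [finSumFinEquiv_symm_apply_castAdd]
    rfl
  · intro i
    show W (τ (finSumFinEquiv.symm (Fin.natAdd n i))) = _
    rw [finSumFinEquiv_symm_apply_natAdd]
    exact hψ (g i)
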